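/- Let G be a connected trivially perfect graph (a connected graph with no induced subgraph isomorphic to P_4 or C_4) admitting a partition W = {W_1, …, W_k} of its vertex set into sets of true twins (each W_i is a set of pairwise true twins) with |W_i| ≥ 6 for every i = 1, …, k. Then the distance matrix D(G) is nonsingular, i.e., its nullity is 0. -/

import Mathlib

open SimpleGraph

/-- The distance matrix of a finite simple graph, over ℚ: the `(u,v)` entry is the
graph distance between `u` and `v`. -/
noncomputable def distMatrix {V : Type*} [Fintype V] (G : SimpleGraph V) : Matrix V V ℚ :=
  fun u v => (G.dist u v : ℚ)

/-- Two vertices are true twins if their closed neighborhoods coincide. -/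
def TrueTwins {V : Type*} (G : SimpleGraph V) (u v : V) : Prop :=
  insert u (G.neighborSet u) = insert v (G.neighborSet v)

/-- Two vertices are false twins if their open neighborhoods coincide. -/
def FalseTwins {V : Type*} (G : SimpleGraph V) (u v : V) : Prop :=
  G.neighborSet u = G.neighborSet v

open Finset
open scoped Classical
set_option linter.unusedSectionVars false
set_option maxHeartbeats 1000000

section Aux

variable {V : Type*} [Fintype V] [DecidableEq V] (G : SimpleGraph V)

/-- Reachability within a finset. -/
def RW (s : Finset V) (a b : V) : Prop :=
  Relation.ReflTransGen (fun x y => x ∈ s ∧ y ∈ s ∧ G.Adj x y) a b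

variable {G}

lemma RW.symm {s : Finset V} {a b : V} (h : RW G s a b) : RW G s b a := by
  induction h with
  | refl => exact Relation.ReflTransGen.refl
  | tail _ hbc ih => exact Relation.ReflTransGen.head ⟨hbc.2.1, hbc.1, hbc.2.2.symm⟩ ih

lemma RW.trans {s : Finset V} {a b c : V} (h : RW G s a b) (h' : RW G s b c) :
    RW G s a c := Relation.ReflTransGen.trans h h'

lemma RW.mem_right {s : Finset V} {a b : V} (ha : a ∈ s) (h : RW G s a b) : b ∈ s := by
  induction h with
  | refl => exact ha
  | tail _ h ih => exact h.2.1

/-- the component of v inside t -/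
noncomputable def comp (G : SimpleGraph V) (t : Finset V) (v : V) : Finset V :=
  t.filter (fun x => RW G t v x)

lemma comp_subset {t : Finset V} {v : V} : comp G t v ⊆ t := filter_subset _ _

lemma mem_comp_self {t : Finset V} {v : V} (hv : v ∈ t) : v ∈ comp G t v :=
  mem_filter.2 ⟨hv, Relation.ReflTransGen.refl⟩

lemma comp_eq_of_mem {t : Finset V} {v x : V} (hx : x ∈ comp G t v) :
    comp G t x = comp G t v := by
  rcases mem_filter.1 hx with ⟨hxt, hrw⟩
  ext y
  simp only [comp, mem_filter, and_congr_right_iff]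
  intro _
  exact ⟨fun h => hrw.trans h, fun h => hrw.symm.trans h⟩

lemma adj_mem_comp {t : Finset V} {v x y : V} (hx : x ∈ comp G t v) (hy : y ∈ t)
    (hadj : G.Adj x y) : y ∈ comp G t v := by
  rcases mem_filter.1 hx with ⟨hxt, hrw⟩
  exact mem_filter.2 ⟨hy, hrw.tail ⟨hxt, hy, hadj⟩⟩

lemma conn_comp {t : Finset V} {v : V} (hv : v ∈ t) :
    ∀ a ∈ comp G t v, ∀ b ∈ comp G t v, RW G (comp G t v) a b := by
  have key : ∀ a, RW G t v a → RW G (comp G t v) v a ∧ (a = v ∨ a ∈ comp G t v) := by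
    intro a h
    induction h with
    | refl => exact ⟨Relation.ReflTransGen.refl, Or.inl rfl⟩
    | @tail b c hvb hbc ih =>
        have hb : b ∈ comp G t v := mem_filter.2 ⟨hbc.1, hvb⟩
        have hc : c ∈ comp G t v := adj_mem_comp hb hbc.2.1 hbc.2.2
        exact ⟨ih.1.tail ⟨hb, hc, hbc.2.2⟩, Or.inr hc⟩
  intro a ha b hb
  have h1 := (key a (mem_filter.1 ha).2).1
  have h2 := (key b (mem_filter.1 hb).2).1
  exact h1.symm.trans h2

lemma TT.adj {u v : V} (h : TrueTwins G u v) (hne : u ≠ v) : G.Adj u v := by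
  have hu : u ∈ insert v (G.neighborSet v) := by
    rw [show insert v (G.neighborSet v) = insert u (G.neighborSet u) from h.symm]
    exact Set.mem_insert _ _
  rcases hu with h' | h'
  · exact absurd h' hne
  · exact (G.adj_symm h')

lemma TT.adj_iff {u v w : V} (h : TrueTwins G u v) (hwu : w ≠ u) (hwv : w ≠ v) :
    (G.Adj u w ↔ G.Adj v w) := by
  have h2 : w ∈ insert u (G.neighborSet u) ↔ w ∈ insert v (G.neighborSet v) := by
    rw [show insert u (G.neighborSet u) = insert v (G.neighborSet v) from h]
  simp only [Set.mem_insert_iff, mem_neighborSet] at h2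
  constructor
  · intro ha; rcases h2.1 (Or.inr ha) with h' | h'
    · exact absurd h' hwv
    · exact h'
  · intro ha; rcases h2.2 (Or.inr ha) with h' | h'
    · exact absurd h' hwu
    · exact h'

lemma p4_embedding {a b c d : V} (hab : G.Adj a b) (hbc : G.Adj b c) (hcd : G.Adj c d)
    (hac : ¬ G.Adj a c) (hbd : ¬ G.Adj b d) (had : ¬ G.Adj a d)
    (hne_ac : a ≠ c) (hne_bd : b ≠ d) (hne_ad : a ≠ d) :
    Nonempty (pathGraph 4 ↪g G) := by
  have hca : ¬ G.Adj c a := fun h => hac h.symm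
  have hdb : ¬ G.Adj d b := fun h => hbd h.symm
  have hda : ¬ G.Adj d a := fun h => had h.symm
  refine ⟨⟨⟨![a,b,c,d], ?_⟩, ?_⟩⟩
  · intro i j hij
    fin_cases i <;> fin_cases j <;> simp_all <;>
      first
        | rfl
        | exact absurd hij.symm hab.ne | exact absurd hij hab.ne
        | exact absurd hij.symm hbc.ne | exact absurd hij hbc.ne
        | exact absurd hij.symm hcd.ne | exact absurd hij hcd.ne
        | exact absurd hij hne_ac | exact absurd hij.symm hne_ac
        | exact absurd hij hne_bd | exact absurd hij.symm hne_bd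
        | exact absurd hij hne_ad | exact absurd hij.symm hne_ad
  · intro i j
    fin_cases i <;> fin_cases j <;>
      simp only [Matrix.cons_val_zero, Matrix.cons_val_one, Matrix.head_cons,
        Matrix.cons_val_two, Matrix.tail_cons, Matrix.cons_val_three, pathGraph_adj,
        Fin.isValue, Fin.val_zero, Fin.val_one, Fin.val_two] <;>
      first
        | exact iff_of_false (G.irrefl) (by decide)
        | exact iff_of_true hab (by decide) | exact iff_of_true hab.symm (by decide)
        | exact iff_of_true hbc (by decide) | exact iff_of_true hbc.symm (by decide)
        | exact iff_of_true hcd (by decide) | exact iff_of_true hcd.symm (by decide)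
        | exact iff_of_false hac (by decide) | exact iff_of_false hca (by decide)
        | exact iff_of_false hbd (by decide) | exact iff_of_false hdb (by decide)
        | exact iff_of_false had (by decide) | exact iff_of_false hda (by decide)

lemma c4_embedding {a b c d : V} (hab : G.Adj a b) (hbc : G.Adj b c) (hcd : G.Adj c d)
    (hda : G.Adj d a) (hac : ¬ G.Adj a c) (hbd : ¬ G.Adj b d)
    (hne_ac : a ≠ c) (hne_bd : b ≠ d) :
    Nonempty (cycleGraph 4 ↪g G) := by
  have hca : ¬ G.Adj c a := fun h => hac h.symm
  have hdb : ¬ G.Adj d b := fun h => hbd h.symm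
  refine ⟨⟨⟨![a,b,c,d], ?_⟩, ?_⟩⟩
  · intro i j hij
    fin_cases i <;> fin_cases j <;> simp_all <;>
      first
        | rfl
        | exact absurd hij.symm hab.ne | exact absurd hij hab.ne
        | exact absurd hij.symm hbc.ne | exact absurd hij hbc.ne
        | exact absurd hij.symm hcd.ne | exact absurd hij hcd.ne
        | exact absurd hij.symm hda.ne | exact absurd hij hda.ne
        | exact absurd hij hne_ac | exact absurd hij.symm hne_ac
        | exact absurd hij hne_bd | exact absurd hij.symm hne_bd
  · intro i j
    fin_cases i <;> fin_cases j <;>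
      simp only [Matrix.cons_val_zero, Matrix.cons_val_one, Matrix.head_cons,
        Matrix.cons_val_two, Matrix.tail_cons, Matrix.cons_val_three,
        show ∀ u v : Fin 4, (cycleGraph 4).Adj u v ↔ u - v = 1 ∨ v - u = 1 from
          fun u v => cycleGraph_adj] <;>
      first
        | exact iff_of_false (G.irrefl) (by decide)
        | exact iff_of_true hab (by decide) | exact iff_of_true hab.symm (by decide)
        | exact iff_of_true hbc (by decide) | exact iff_of_true hbc.symm (by decide)
        | exact iff_of_true hcd (by decide) | exact iff_of_true hcd.symm (by decide)
        | exact iff_of_true hda (by decide) | exact iff_of_true hda.symm (by decide)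
        | exact iff_of_false hac (by decide) | exact iff_of_false hca (by decide)
        | exact iff_of_false hbd (by decide) | exact iff_of_false hdb (by decide)


open SimpleGraph in
lemma exists_universal
    (hP4 : ¬ Nonempty (pathGraph 4 ↪g G)) (hC4 : ¬ Nonempty (cycleGraph 4 ↪g G))
    (s : Finset V) (hne : s.Nonempty) (hconn : ∀ a ∈ s, ∀ b ∈ s, RW G s a b) :
    ∃ u ∈ s, ∀ v ∈ s, v ≠ u → G.Adj u v := by
  obtain ⟨u, hu, hmax⟩ := s.exists_max_image (fun v => (s.filter (fun y => G.Adj v y)).card) hne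
  -- key claim: neighbors of neighbors of u are in N[u]
  have claim : ∀ w ∈ s, G.Adj u w → ∀ x ∈ s, G.Adj w x → x = u ∨ G.Adj u x := by
    intro w hw huw x hx hwx
    by_contra hcon
    push_neg at hcon
    obtain ⟨hxu, hux⟩ := hcon
    by_cases hy : ∃ y ∈ s, G.Adj u y ∧ ¬ G.Adj w y ∧ y ≠ w
    · obtain ⟨y, hys, huy, hwy, hyw⟩ := hy
      have hxy_ne : x ≠ y := fun h => hwy (h ▸ hwx)
      have hxw_ne : x ≠ w := hwx.ne'
      by_cases hxy : G.Adj x y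
      · -- C4 : x - w - u - y - x
        exact hC4 (c4_embedding hwx.symm huw.symm huy hxy.symm
          (fun h => hux h.symm) (fun h => hwy h) hxu hyw.symm)
      · -- P4 : x - w - u - y
        exact hP4 (p4_embedding hwx.symm huw.symm huy
          (fun h => hux h.symm) (fun h => hwy h) hxy hxu hyw.symm hxy_ne)
    · push_neg at hy
      -- then deg w > deg u
      have hsub : insert u (insert x ((s.filter (fun y => G.Adj u y)).erase w))
          ⊆ s.filter (fun y => G.Adj w y) := by
        intro z hz
        simp only [mem_insert] at hz
        rcases hz with rfl | rfl | hz
        · exact mem_filter.2 ⟨hu, huw.symm⟩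
        · exact mem_filter.2 ⟨hx, hwx⟩
        · rcases mem_filter.1 (mem_of_mem_erase hz) with ⟨hzs, huz⟩
          refine mem_filter.2 ⟨hzs, ?_⟩
          by_contra hcon2
          exact (ne_of_mem_erase hz) (hy z hzs huz hcon2)
      have hcard : (s.filter (fun y => G.Adj u y)).card + 1 ≤
          (s.filter (fun y => G.Adj w y)).card := by
        have h1 : u ∉ insert x ((s.filter (fun y => G.Adj u y)).erase w) := by
          simp only [mem_insert, mem_erase, mem_filter, not_or]
          refine ⟨fun h => hxu h.symm, ?_⟩
          rintro ⟨-, -, h⟩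
          exact G.irrefl h
        have h2 : x ∉ (s.filter (fun y => G.Adj u y)).erase w := by
          simp only [mem_erase, mem_filter, not_and]
          intro _ _
          exact hux
        have hwA : w ∈ s.filter (fun y => G.Adj u y) := mem_filter.2 ⟨hw, huw⟩
        have hA1 : 1 ≤ (s.filter (fun y => G.Adj u y)).card := card_pos.2 ⟨w, hwA⟩
        have e1 : ((s.filter (fun y => G.Adj u y)).erase w).card =
            (s.filter (fun y => G.Adj u y)).card - 1 := card_erase_of_mem hwA
        have e2 := card_le_card hsub
        rw [card_insert_of_notMem h1, card_insert_of_notMem h2, e1] at e2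
        omega
      have := hmax w hw
      omega
  -- now propagate along connectivity
  refine ⟨u, hu, fun v hv hvu => ?_⟩
  have : ∀ a, RW G s u a → a = u ∨ G.Adj u a := by
    intro a h
    induction h with
    | refl => exact Or.inl rfl
    | @tail b c hub hbc ih =>
        rcases ih with rfl | hadj
        · exact Or.inr hbc.2.2
        · exact claim b hbc.1 hadj c hbc.2.1 hbc.2.2
  rcases this v (hconn u hu v hv) with rfl | h
  · exact absurd rfl hvu
  · exact h
end Aux

section Aux2
variable {V : Type*} [Fintype V] [DecidableEq V] (G : SimpleGraph V)

noncomputable def Mrow (s : Finset V) (x : V → ℚ) (v : V) : ℚ :=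
  (∑ y ∈ s.filter (fun y => G.Adj v y), x y) + 2 * x v

def DInv (s : Finset V) : Prop :=
  (∀ x : V → ℚ, (∀ v, v ∉ s → x v = 0) → (∀ v ∈ s, Mrow G s x v = 0) → ∀ v, x v = 0) ∧
  (∃ w : V → ℚ, (∀ v, v ∉ s → w v = 0) ∧ (∀ v ∈ s, Mrow G s w v = 1) ∧
    7/10 < ∑ v ∈ s, w v ∧ (∑ v ∈ s, w v) < 1)

variable {G}

lemma Mrow_combo {s : Finset V} {x y : V → ℚ} {c : ℚ} {v : V} :
    Mrow G s (fun u => x u - c * y u) v = Mrow G s x v - c * Mrow G s y v := by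
  simp only [Mrow, sum_sub_distrib, mul_sub, mul_add, mul_sum]
  ring

end Aux2

section Key
variable {V : Type*} [Fintype V] [DecidableEq V] {G : SimpleGraph V}

lemma key_induction
    (hP4 : ¬ Nonempty (SimpleGraph.pathGraph 4 ↪g G))
    (hC4 : ¬ Nonempty (SimpleGraph.cycleGraph 4 ↪g G))
    {k : ℕ} (P : Fin k → Finset V)
    (hpart : ∀ v : V, ∃! i, v ∈ P i)
    (htwins : ∀ i, ∀ u ∈ P i, ∀ v ∈ P i, TrueTwins G u v)
    (hsize : ∀ i, 6 ≤ (P i).card) :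
    ∀ (n : ℕ) (s : Finset V), s.card ≤ n → s.Nonempty →
      (∀ i, (P i ∩ s).Nonempty → P i ⊆ s) →
      (∀ a ∈ s, ∀ b ∈ s, RW G s a b) → DInv G s := by
  intro n
  induction n with
  | zero =>
      intro s hc hne
      have := card_pos.2 hne
      omega
  | succ n IH =>
      intro s hcard hne hcompat hconn
      obtain ⟨u, hu, huniv⟩ := exists_universal hP4 hC4 s hne hconn
      obtain ⟨i₀, hui₀, -⟩ := hpart u
      set W : Finset V := P i₀ with hWdef
      have hWs : W ⊆ s := hcompat i₀ ⟨u, mem_inter.2 ⟨hui₀, hu⟩⟩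
      have hm6 : 6 ≤ W.card := hsize i₀
      -- every vertex of W is universal in s
      have hWu : ∀ v ∈ W, ∀ x ∈ s, x ≠ v → G.Adj v x := by
        intro v hv x hx hxv
        by_cases hvu : v = u
        · subst hvu; exact huniv x hx hxv
        · have htw : TrueTwins G u v := htwins i₀ u hui₀ v hv
          by_cases hxu : x = u
          · subst hxu; exact (TT.adj htw (fun h => hvu h.symm)).symm
          · exact (TT.adj_iff htw hxu hxv).1 (huniv x hx hxu)
      have filter_univ : ∀ v ∈ W, s.filter (fun y => G.Adj v y) = s.erase v := by
        intro v hv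
        ext y
        simp only [mem_filter, mem_erase]
        constructor
        · rintro ⟨hy, hadj⟩; exact ⟨hadj.ne', hy⟩
        · rintro ⟨hne', hy⟩; exact ⟨hy, hWu v hv y hy hne'⟩
      set t : Finset V := s \ W with htdef
      by_cases htem : t = ∅
      · -- base case : s = W is a clique
        have hsW : s = W := by
          have : s ⊆ W := by
            intro z hz
            by_contra hzW
            have : z ∈ t := mem_sdiff.2 ⟨hz, hzW⟩
            simp [htem] at this
          exact Subset.antisymm this hWs
        -- now s = W (renamed: W replaced by s everywhere via hsW)
        have hcliq : ∀ v ∈ s, s.filter (fun y => G.Adj v y) = s.erase v := by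
          intro v hv; exact filter_univ v (hsW ▸ hv)
        have hs6 : 6 ≤ s.card := hsW ▸ hm6
        have hmq : (6:ℚ) ≤ (s.card : ℚ) := by exact_mod_cast hs6
        constructor
        · intro x hsupp hrows
          have hx : ∀ v ∈ s, x v = -∑ y ∈ s, x y := by
            intro v hv
            have hr := hrows v hv
            rw [Mrow, hcliq v hv] at hr
            have he : (∑ y ∈ s.erase v, x y) + x v = ∑ y ∈ s, x y :=
              Finset.sum_erase_add s x hv
            linarith
          have hσ : ∑ y ∈ s, x y = (s.card : ℚ) * (-∑ y ∈ s, x y) := by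
            calc ∑ y ∈ s, x y = ∑ y ∈ s, (-∑ z ∈ s, x z) := sum_congr rfl hx
            _ = (s.card : ℚ) * (-∑ z ∈ s, x z) := by rw [sum_const, nsmul_eq_mul]
          have hσ0 : ∑ y ∈ s, x y = 0 := by nlinarith [hσ, hmq]
          intro v
          by_cases hv : v ∈ s
          · rw [hx v hv, hσ0]; ring
          · exact hsupp v hv
        · refine ⟨fun v => if v ∈ s then 1/((s.card : ℚ)+1) else 0, ?_, ?_, ?_, ?_⟩
          · intro v hv; simp only [if_neg hv]
          · intro v hv
            simp only [Mrow]
            rw [hcliq v hv, if_pos hv]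
            have : ∀ y ∈ s.erase v, (if y ∈ s then 1/((s.card : ℚ)+1) else 0)
                = 1/((s.card : ℚ)+1) := by
              intro y hy; rw [if_pos (mem_of_mem_erase hy)]
            rw [sum_congr rfl this, sum_const, card_erase_of_mem hv, nsmul_eq_mul]
            have h1 : ((s.card - 1 : ℕ) : ℚ) = (s.card : ℚ) - 1 := by
              rw [Nat.cast_sub (by omega : 1 ≤ s.card)]
              norm_num
            rw [h1]
            field_simp
            ring
          · have : ∑ v ∈ s, (if v ∈ s then 1/((s.card : ℚ)+1) else 0)
                = (s.card : ℚ) * (1/((s.card : ℚ)+1)) := by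
              rw [sum_congr rfl (fun y hy => if_pos hy), sum_const, nsmul_eq_mul]
            rw [this]
            rw [show (s.card : ℚ) * (1/((s.card : ℚ)+1)) = (s.card : ℚ)/((s.card : ℚ)+1) by ring]
            rw [lt_div_iff₀ (by linarith)]
            linarith
          · have : ∑ v ∈ s, (if v ∈ s then 1/((s.card : ℚ)+1) else 0)
                = (s.card : ℚ) * (1/((s.card : ℚ)+1)) := by
              rw [sum_congr rfl (fun y hy => if_pos hy), sum_const, nsmul_eq_mul]
            rw [this]
            rw [show (s.card : ℚ) * (1/((s.card : ℚ)+1)) = (s.card : ℚ)/((s.card : ℚ)+1) by ring]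
            rw [div_lt_one (by linarith)]
            linarith
      · -- inductive case: t nonempty
        have htne : t.Nonempty := nonempty_iff_ne_empty.2 htem
        have hts : t ⊆ s := sdiff_subset
        have hWt_disj : Disjoint W t := Finset.disjoint_sdiff
        have hnotW : ∀ v ∈ t, v ∉ W := fun v hv => (mem_sdiff.1 hv).2
        set 𝒞 : Finset (Finset V) := t.image (comp G t) with hCdef
        have hCmem : ∀ v ∈ t, comp G t v ∈ 𝒞 := fun v hv => mem_image_of_mem _ hv
        have hCt : ∀ C ∈ 𝒞, C ⊆ t := by
          intro C hC; obtain ⟨v, hv, rfl⟩ := mem_image.1 hC; exact comp_subset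
        have hCrep : ∀ C ∈ 𝒞, ∀ y ∈ C, comp G t y = C := by
          intro C hC y hy
          obtain ⟨v, hv, rfl⟩ := mem_image.1 hC
          exact comp_eq_of_mem hy
        have hCne : ∀ C ∈ 𝒞, C.Nonempty := by
          intro C hC; obtain ⟨v, hv, rfl⟩ := mem_image.1 hC
          exact ⟨v, mem_comp_self hv⟩
        have hCdisj : ∀ C₁ ∈ 𝒞, ∀ C₂ ∈ 𝒞, C₁ ≠ C₂ → ∀ y, y ∈ C₁ → y ∉ C₂ := by
          intro C₁ h1 C₂ h2 hne12 y hy1 hy2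
          exact hne12 ((hCrep C₁ h1 y hy1).symm.trans (hCrep C₂ h2 y hy2))
        have hcover : t = 𝒞.biUnion id := by
          ext y
          simp only [mem_biUnion, id]
          constructor
          · intro hy; exact ⟨comp G t y, hCmem y hy, mem_comp_self hy⟩
          · rintro ⟨C, hC, hyC⟩; exact hCt C hC hyC
        have hPD : (↑𝒞 : Set (Finset V)).PairwiseDisjoint id := by
          intro C₁ h1 C₂ h2 hne12
          simp only [Function.onFun, id]
          rw [Finset.disjoint_left]
          exact fun {y} hy1 => hCdisj C₁ h1 C₂ h2 hne12 y hy1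
        have hsum_t : ∀ g : V → ℚ, ∑ y ∈ t, g y = ∑ C ∈ 𝒞, ∑ y ∈ C, g y := by
          intro g
          conv_lhs => rw [hcover]
          exact sum_biUnion hPD
        have htcard : t.card ≤ n := by
          have h1 : t.card = s.card - W.card := by rw [card_sdiff, inter_eq_left.2 hWs]
          have h2 : W.card ≤ s.card := card_le_card hWs
          omega
        have hIC : ∀ C ∈ 𝒞, DInv G C := by
          intro C hC
          obtain ⟨v, hv, rfl⟩ := mem_image.1 hC
          refine IH (comp G t v) (le_trans (card_le_card comp_subset) htcard)
            ⟨v, mem_comp_self hv⟩ ?_ (conn_comp hv)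
          intro j hj
          obtain ⟨x, hx⟩ := hj
          rcases mem_inter.1 hx with ⟨hxPj, hxC⟩
          have hxt : x ∈ t := comp_subset hxC
          have hPjs : P j ⊆ s := hcompat j ⟨x, mem_inter.2 ⟨hxPj, hts hxt⟩⟩
          have hPjW : ∀ y ∈ P j, y ∉ W := by
            intro y hy hyW
            obtain ⟨iy, hiy, huniq⟩ := hpart y
            have e1 : j = iy := huniq j hy
            have e2 : i₀ = iy := huniq i₀ hyW
            have hPeq : P j = P i₀ := by rw [e1, e2]
            have : x ∈ W := by rw [hWdef, ← hPeq]; exact hxPj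
            exact hnotW x hxt this
          intro z hz
          have hzt : z ∈ t := mem_sdiff.2 ⟨hPjs hz, hPjW z hz⟩
          by_cases hzx : z = x
          · subst hzx; exact hxC
          · have htw : TrueTwins G x z := htwins j x hxPj z hz
            exact adj_mem_comp hxC hzt (TT.adj htw (fun h => hzx h.symm))
        have hex : ∀ C : Finset V, ∃ w : V → ℚ, C ∈ 𝒞 →
            ((∀ v, v ∉ C → w v = 0) ∧ (∀ v ∈ C, Mrow G C w v = 1) ∧
              7/10 < ∑ v ∈ C, w v ∧ (∑ v ∈ C, w v) < 1) := by
          intro C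
          by_cases hC : C ∈ 𝒞
          · obtain ⟨w, hw⟩ := (hIC C hC).2
            exact ⟨w, fun _ => hw⟩
          · exact ⟨0, fun h => absurd h hC⟩
        choose f hf using hex
        set Φ : Finset V → ℚ := fun C => ∑ v ∈ C, f C v with hΦdef
        set S : ℚ := ∑ C ∈ 𝒞, Φ C with hSdef
        set mq : ℚ := (W.card : ℚ) with hmqdef
        have hmq6 : (6:ℚ) ≤ mq := by rw [hmqdef]; exact_mod_cast hm6
        set dd : ℚ := 1 + mq - mq * S with hddef
        set a : ℚ := (1 - S)/dd with hadef
        have hΦb : ∀ C ∈ 𝒞, 7/10 < Φ C ∧ Φ C < 1 :=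
          fun C hC => ⟨(hf C hC).2.2.1, (hf C hC).2.2.2⟩
        have hCnonempty : 𝒞.Nonempty := by
          obtain ⟨v, hv⟩ := htne
          exact ⟨comp G t v, hCmem v hv⟩
        have hScase : (7/10 < S ∧ S < 1) ∨ 7/5 ≤ S := by
          by_cases h1 : 𝒞.card = 1
          · obtain ⟨C, hCeq⟩ := card_eq_one.1 h1
            left
            have hCin : C ∈ 𝒞 := hCeq ▸ mem_singleton_self C
            rw [hSdef, hCeq, sum_singleton]
            exact hΦb C hCin
          · right
            have hcpos : 1 ≤ 𝒞.card := card_pos.2 hCnonempty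
            have h2 : 2 ≤ 𝒞.card := by omega
            have hlow : (𝒞.card : ℚ) * (7/10) ≤ S := by
              have hle := Finset.card_nsmul_le_sum 𝒞 Φ (7/10)
                (fun C hC => le_of_lt (hΦb C hC).1)
              rw [nsmul_eq_mul] at hle
              exact hle
            have h2q : (2:ℚ) ≤ (𝒞.card : ℚ) := by exact_mod_cast h2
            nlinarith
        have hddsign : (0 < dd ∧ S < 1) ∨ (dd < 0) := by
          rcases hScase with ⟨hS1, hS2⟩ | hS
          · left; constructor
            · rw [hddef]; nlinarith
            · exact hS2
          · right; rw [hddef]; nlinarith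
        have hd0 : dd ≠ 0 := by
          rcases hddsign with ⟨h, _⟩ | h
          · linarith
          · linarith
        have ha0 : 0 < a := by
          rcases hddsign with ⟨h, hS2⟩ | h
          · rw [hadef]; exact div_pos (by linarith) h
          · rw [hadef]
            have hS : 7/5 ≤ S := by
              rcases hScase with ⟨hS1, hS2⟩ | hS
              · exfalso; rw [hddef] at h; nlinarith
              · exact hS
            apply div_pos_of_neg_of_neg (by linarith) h
        have ha3 : a < 3/10 := by
          rcases hddsign with ⟨h, hS2⟩ | h
          · have hdd1 : 1 ≤ dd := by
              rw [hddef]; nlinarith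
            have := div_le_self (by linarith : (0:ℚ) ≤ 1 - S) hdd1
            rcases hScase with ⟨hS1, _⟩ | hS
            · rw [hadef]; linarith
            · exfalso; rw [hddef] at h; nlinarith
          · rw [hadef, div_lt_iff_of_neg h]
            have hS : 7/5 ≤ S := by
              rcases hScase with ⟨hS1, hS2⟩ | hS
              · exfalso; rw [hddef] at h; nlinarith
              · exact hS
            rw [hddef]
            nlinarith
        have hda : a * dd = 1 - S := div_mul_cancel₀ _ hd0
        have filter_t : ∀ v ∈ t, s.filter (fun y => G.Adj v y)
            = W ∪ (comp G t v).filter (fun y => G.Adj v y) := by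
          intro v hv
          ext y
          simp only [mem_filter, mem_union]
          constructor
          · rintro ⟨hys, hadj⟩
            by_cases hyW : y ∈ W
            · exact Or.inl hyW
            · have hyt : y ∈ t := mem_sdiff.2 ⟨hys, hyW⟩
              exact Or.inr ⟨adj_mem_comp (mem_comp_self hv) hyt hadj, hadj⟩
          · rintro (hyW | ⟨hyC, hadj⟩)
            · have hvy : v ≠ y := fun h => hnotW v hv (h ▸ hyW)
              exact ⟨hWs hyW, (hWu y hyW v (hts hv) hvy).symm⟩
            · exact ⟨hts (comp_subset hyC), hadj⟩
        have hdisjWF : ∀ v : V, Disjoint W ((comp G t v).filter (fun y => G.Adj v y)) :=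
          fun v => hWt_disj.mono_right (le_trans (filter_subset _ _) comp_subset)
        constructor
        · -- kernel
          intro x hsupp hrows
          set σx : ℚ := ∑ y ∈ s, x y with hσxdef
          have hxW : ∀ v ∈ W, x v = -σx := by
            intro v hv
            have hr := hrows v (hWs hv)
            simp only [Mrow] at hr
            rw [filter_univ v hv] at hr
            have he : (∑ y ∈ s.erase v, x y) + x v = σx := sum_erase_add s x (hWs hv)
            linarith
          have hSWx : ∑ y ∈ W, x y = mq * (-σx) := by
            rw [sum_congr rfl hxW, sum_const, nsmul_eq_mul, hmqdef]
          have hcomp : ∀ C ∈ 𝒞, ∀ y ∈ C, x y = (mq * σx) * f C y := by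
            intro C hC
            have hz0 : ∀ y, ((if y ∈ C then x y else 0) - (mq * σx) * f C y) = 0 := by
              apply (hIC C hC).1
              · intro y hyC
                rw [if_neg hyC, (hf C hC).1 y hyC]; ring
              · intro v hvC
                have hvt : v ∈ t := hCt C hC hvC
                have hr := hrows v (hts hvt)
                simp only [Mrow] at hr
                rw [filter_t v hvt, sum_union (hdisjWF v), hCrep C hC v hvC] at hr
                have hMz : Mrow G C (fun y => (if y ∈ C then x y else 0) - (mq * σx) * f C y) v
                    = Mrow G C (fun y => if y ∈ C then x y else 0) v
                      - (mq * σx) * Mrow G C (f C) v := Mrow_combo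
                have hMxC : Mrow G C (fun y => if y ∈ C then x y else 0) v
                    = (∑ y ∈ C.filter (fun y => G.Adj v y), x y) + 2 * x v := by
                  simp only [Mrow, if_pos hvC]
                  congr 1
                  refine sum_congr rfl ?_
                  intro y hy; rw [if_pos (mem_filter.1 hy).1]
                have hMf := (hf C hC).2.1 v hvC
                rw [hMz, hMxC, hMf]
                linarith [hSWx, hr]
            intro y hyC
            have hy0 := hz0 y
            rw [if_pos hyC] at hy0
            linarith
          have hStx : ∑ y ∈ t, x y = (mq * σx) * S := by
            rw [hsum_t x, sum_congr rfl
              (fun C hC => sum_congr rfl (fun y hy => hcomp C hC y hy))]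
            have : ∀ C ∈ 𝒞, ∑ y ∈ C, (mq * σx) * f C y = (mq * σx) * Φ C := by
              intro C hC; rw [← mul_sum]
            rw [sum_congr rfl this, ← mul_sum, ← hSdef]
          have hσeq : σx = mq * (-σx) + (mq * σx) * S := by
            rw [hσxdef]
            conv_lhs => rw [← sum_sdiff hWs]
            rw [hSWx]
            have : s \ W = t := rfl
            rw [this, hStx]
            ring
          have hσdd : σx * dd = 0 := by
            rw [hddef]; linear_combination hσeq
          have hσx0 : σx = 0 := by
            rcases mul_eq_zero.1 hσdd with h | h
            · exact h
            · exact absurd h hd0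
          intro v
          by_cases hvs : v ∈ s
          · by_cases hvW : v ∈ W
            · rw [hxW v hvW, hσx0]; ring
            · have hvt : v ∈ t := mem_sdiff.2 ⟨hvs, hvW⟩
              rw [hcomp _ (hCmem v hvt) v (mem_comp_self hvt), hσx0]; ring
          · exact hsupp v hvs
        · -- existence
          set w : V → ℚ := fun v => if v ∈ W then a else (1 - mq*a) * ∑ C ∈ 𝒞, f C v
            with hwdef
          have hwW : ∀ v ∈ W, w v = a := by
            intro v hv; simp only [hwdef, if_pos hv]
          have hwt : ∀ v ∈ t, w v = (1 - mq*a) * f (comp G t v) v := by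
            intro v hv
            simp only [hwdef, if_neg (hnotW v hv)]
            congr 1
            rw [Finset.sum_eq_single_of_mem (comp G t v) (hCmem v hv)]
            intro C hC hne'
            exact (hf C hC).1 v (fun hvC => hne' (hCrep C hC v hvC).symm)
          have hw0 : ∀ v, v ∉ s → w v = 0 := by
            intro v hv
            simp only [hwdef, if_neg (fun h => hv (hWs h))]
            rw [Finset.sum_eq_zero, mul_zero]
            intro C hC
            exact (hf C hC).1 v (fun hvC => hv (hts (hCt C hC hvC)))
          have hSW : ∑ y ∈ W, w y = mq * a := by
            rw [sum_congr rfl hwW, sum_const, nsmul_eq_mul, hmqdef]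
          have hSCw : ∀ C ∈ 𝒞, ∑ y ∈ C, w y = (1 - mq*a) * Φ C := by
            intro C hC
            calc ∑ y ∈ C, w y = ∑ y ∈ C, (1 - mq*a) * f C y := by
                  refine sum_congr rfl ?_
                  intro y hy
                  rw [hwt y (hCt C hC hy), hCrep C hC y hy]
            _ = (1 - mq*a) * Φ C := by rw [← mul_sum]
          have hσa : ∑ y ∈ s, w y = 1 - a := by
            conv_lhs => rw [← sum_sdiff hWs]
            have : s \ W = t := rfl
            rw [this, hsum_t w, sum_congr rfl hSCw, ← mul_sum, hSW]
            rw [← hSdef]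
            linear_combination hda
          refine ⟨w, hw0, ?_, by rw [hσa]; linarith, by rw [hσa]; linarith⟩
          intro v hv
          by_cases hvW : v ∈ W
          · simp only [Mrow]
            rw [filter_univ v hvW]
            have he : (∑ y ∈ s.erase v, w y) + w v = ∑ y ∈ s, w y :=
              sum_erase_add s w hv
            rw [hσa] at he
            have hwv := hwW v hvW
            linarith
          · have hvt : v ∈ t := mem_sdiff.2 ⟨hv, hvW⟩
            have hC0 : comp G t v ∈ 𝒞 := hCmem v hvt
            have hv0 : v ∈ comp G t v := mem_comp_self hvt
            simp only [Mrow]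
            rw [filter_t v hvt, sum_union (hdisjWF v), hSW]
            have e1 : ∑ y ∈ (comp G t v).filter (fun y => G.Adj v y), w y
                = (1 - mq*a) * ∑ y ∈ (comp G t v).filter (fun y => G.Adj v y),
                    f (comp G t v) y := by
              rw [mul_sum]
              refine sum_congr rfl ?_
              intro y hy
              rcases mem_filter.1 hy with ⟨hyC, _⟩
              rw [hwt y (hCt _ hC0 hyC)]
              rw [hCrep _ hC0 y hyC]
            have e2 := (hf _ hC0).2.1 v hv0
            simp only [Mrow] at e2
            rw [e1, hwt v hvt]
            linear_combination (1 - mq*a) * e2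
end Key

section Final
open SimpleGraph

theorem distMatrix_nonsingular_aux {V : Type*} [Fintype V] [DecidableEq V]
    (G : SimpleGraph V) (hG : G.Connected)
    (hP4 : ¬ Nonempty (pathGraph 4 ↪g G))
    (hC4 : ¬ Nonempty (cycleGraph 4 ↪g G))
    {k : ℕ} (P : Fin k → Finset V)
    (hpart : ∀ v : V, ∃! i, v ∈ P i)
    (htwins : ∀ i, ∀ u ∈ P i, ∀ v ∈ P i, TrueTwins G u v)
    (hsize : ∀ i, 6 ≤ (P i).card) :
    (distMatrix G).det ≠ 0 := by
  classical
  have hne : Nonempty V := hG.nonempty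
  have hwalk : ∀ {a b : V}, G.Walk a b → RW G univ a b := by
    intro a b p
    induction p with
    | nil => exact Relation.ReflTransGen.refl
    | cons h p ih => exact Relation.ReflTransGen.head ⟨mem_univ _, mem_univ _, h⟩ ih
  have hconn : ∀ a ∈ (univ : Finset V), ∀ b ∈ (univ : Finset V), RW G univ a b :=
    fun a _ b _ => hwalk (hG.preconnected a b).some
  obtain ⟨u0, -, hu0⟩ := exists_universal hP4 hC4 univ univ_nonempty hconn
  have hdist : ∀ v u : V, (G.dist v u : ℚ)
      = 2 - (if G.Adj v u then 1 else 0) - (if v = u then 2 else 0) := by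
    intro v u
    by_cases hvu : v = u
    · subst hvu
      simp [SimpleGraph.dist_self]
    · by_cases hadj : G.Adj v u
      · rw [if_pos hadj, if_neg hvu, SimpleGraph.dist_eq_one_iff_adj.2 hadj]
        norm_num
      · rw [if_neg hadj, if_neg hvu]
        have hvu0 : v ≠ u0 := by
          rintro rfl
          exact hadj (hu0 u (mem_univ u) (fun h => hvu h.symm))
        have huu0 : u ≠ u0 := by
          rintro rfl
          exact hadj (hu0 v (mem_univ v) hvu).symm
        have h2 : G.dist v u = 2 := by
          have hle : G.dist v u ≤ 2 := by
            have t1 : G.dist v u0 = 1 :=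
              SimpleGraph.dist_eq_one_iff_adj.2 (hu0 v (mem_univ v) hvu0).symm
            have t2 : G.dist u0 u = 1 :=
              SimpleGraph.dist_eq_one_iff_adj.2 (hu0 u (mem_univ u) huu0)
            have := hG.dist_triangle (u := v) (v := u0) (w := u)
            omega
          have h0 : G.dist v u ≠ 0 :=
            Nat.pos_iff_ne_zero.mp (hG.pos_dist_of_ne hvu)
          have h1 : G.dist v u ≠ 1 := fun h =>
            hadj (SimpleGraph.dist_eq_one_iff_adj.1 h)
          omega
        rw [h2]; norm_num
  have hinv : DInv G univ :=
    key_induction hP4 hC4 P hpart htwins hsize (Fintype.card V) univ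
      (by rw [card_univ]) univ_nonempty (fun i _ => subset_univ _) hconn
  intro hdet
  obtain ⟨x, hx0, hxv⟩ := (Matrix.exists_mulVec_eq_zero_iff).2 hdet
  have hrow : ∀ v, Mrow G univ x v = 2 * ∑ y ∈ univ, x y := by
    intro v
    have hv := congrFun hxv v
    rw [Matrix.mulVec, dotProduct] at hv
    rw [Pi.zero_apply] at hv
    simp only [distMatrix] at hv
    have expand : ∀ u : V, (G.dist v u : ℚ) * x u
        = 2 * x u - (if G.Adj v u then x u else 0) - (if v = u then 2 * x u else 0) := by
      intro u
      rw [hdist v u]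
      by_cases h1 : G.Adj v u <;> by_cases h2 : v = u <;> simp [h1, h2] <;> ring
    rw [sum_congr rfl (fun u _ => expand u)] at hv
    rw [sum_sub_distrib, sum_sub_distrib] at hv
    rw [Finset.sum_ite_eq univ v (fun u => 2 * x u)] at hv
    rw [if_pos (mem_univ v)] at hv
    rw [← Finset.sum_filter] at hv
    rw [← mul_sum] at hv
    simp only [Mrow]
    linarith
  obtain ⟨hker, w, hw0, hw1, hb1, hb2⟩ := hinv
  have hy : ∀ v, x v - (2 * ∑ y ∈ univ, x y) * w v = 0 := by
    apply hker
    · intro v hv; exact absurd (mem_univ v) hv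
    · intro v _
      rw [Mrow_combo, hrow v, hw1 v (mem_univ v)]; ring
  have hxw : ∀ v, x v = (2 * ∑ y ∈ univ, x y) * w v := fun v => by linarith [hy v]
  have hσ : (∑ y ∈ univ, x y) = (2 * ∑ y ∈ univ, x y) * (∑ v ∈ univ, w v) := by
    conv_lhs => rw [sum_congr rfl (fun v _ => hxw v)]
    rw [← mul_sum]
  have h1 : (∑ y ∈ univ, x y) * (1 - 2 * ∑ v ∈ univ, w v) = 0 := by
    linear_combination hσ
  have hs0 : (∑ y ∈ univ, x y) = 0 := by
    rcases mul_eq_zero.1 h1 with h | h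
    · exact h
    · exfalso; linarith
  apply hx0
  funext v
  rw [Pi.zero_apply, hxw v, hs0]
  ring


/-- If a connected trivially perfect graph (no induced P₄ and no induced C₄) admits a
partition of its vertex set into sets of pairwise true twins, each of size at least 6,
then its distance matrix is nonsingular. -/
theorem distMatrix_nonsingular_of_triviallyPerfect {V : Type*} [Fintype V] [DecidableEq V]
    (G : SimpleGraph V) (hG : G.Connected)
    (hP4 : ¬ Nonempty (pathGraph 4 ↪g G))
    (hC4 : ¬ Nonempty (cycleGraph 4 ↪g G))
    {k : ℕ} (P : Fin k → Finset V)
    (hpart : ∀ v : V, ∃! i, v ∈ P i)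
    (htwins : ∀ i, ∀ u ∈ P i, ∀ v ∈ P i, TrueTwins G u v)
    (hsize : ∀ i, 6 ≤ (P i).card) :
    (distMatrix G).det ≠ 0 := by
  exact distMatrix_nonsingular_aux G hG hP4 hC4 P hpart htwins hsize
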